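/- Let q be a prime power and F_q the finite field with q elements. If X is a subset of Mat_3(F_q) with |X| > q^6 + q^3 + 2, then X contains two distinct matrices A and B such that B - A has nonzero determinant, i.e., B - A is invertible. -/

import Mathlib

open Polynomial

/-- If `X ⊆ Mat₃(F_q)` satisfies `|X| > q^6 + q^3 + 2`, then `X` contains two distinct
matrices whose difference has nonzero determinant. -/
theorem spectral_gap_one_set (q : ℕ) (F : Type*) [Field F] [Fintype F] [DecidableEq F]
    (hq : Fintype.card F = q)
    (X : Finset (Matrix (Fin 3) (Fin 3) F))
    (h : (X.card : ℝ) > (q : ℝ) ^ 6 + (q : ℝ) ^ 3 + 2) :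
    ∃ A ∈ X, ∃ B ∈ X, A ≠ B ∧ (B - A).det ≠ 0 := by
  classical
  subst hq
  set q := Fintype.card F with hq
  -- characteristic
  obtain ⟨p, hpc⟩ := CharP.exists F
  haveI : CharP F p := hpc
  obtain ⟨m, hp, hpm⟩ := FiniteField.card F p
  haveI : Fact p.Prime := ⟨hp⟩
  have hq2 : 1 < q := Fintype.one_lt_card
  -- the algebraic closure
  let Ω := AlgebraicClosure F
  haveI : CharP Ω p := charP_of_injective_algebraMap (algebraMap F Ω).injective p
  have hqpm : q = p ^ (m : ℕ) := by rw [hq, hpm]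
  have hpow : p ^ (3 * (m : ℕ)) = q ^ 3 := by rw [hqpm, ← pow_mul, mul_comm]
  -- the subfield of q^3 elements
  let E : Subfield Ω := (iterateFrobenius Ω p (3 * (m : ℕ))).eqLocusField (RingHom.id Ω)
  have hmemE : ∀ x : Ω, x ∈ E ↔ x ^ q ^ 3 = x := by
    intro x
    change iterateFrobenius Ω p (3 * m) x = x ↔ _
    rw [iterateFrobenius_def, hpow]
  -- F embeds in E
  have halg : ∀ a : F, algebraMap F Ω a ∈ E := by
    intro a
    rw [hmemE, ← map_pow]
    congr 1
    rw [pow_succ, pow_succ, pow_one, pow_mul, pow_mul,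
      FiniteField.pow_card, FiniteField.pow_card, FiniteField.pow_card]
  let ι : F →+* E := (algebraMap F Ω).codRestrict E.toSubring halg
  letI : Algebra F E := ι.toAlgebra
  -- cardinality of E
  have h13 : (1:ℕ) < q ^ 3 := Nat.one_lt_pow three_ne_zero hq2
  set g : F[X] := Polynomial.X ^ q ^ 3 - Polynomial.X with hg
  have hgne : g ≠ 0 := FiniteField.X_pow_card_sub_X_ne_zero _ h13
  have hgsep : g.Separable :=
    galois_poly_separable p (q ^ 3) (by rw [hqpm, ← pow_mul]; exact dvd_pow_self p (by positivity))
  have hgdeg : g.natDegree = q ^ 3 := FiniteField.X_pow_card_sub_X_natDegree_eq _ h13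
  have hroot : g.rootSet Ω = (E : Set Ω) := by
    ext x
    rw [mem_rootSet_of_ne hgne, SetLike.mem_coe, hmemE]
    simp [g, sub_eq_zero]
  have hcardroot : Fintype.card (g.rootSet Ω) = q ^ 3 := by
    rw [card_rootSet_eq_natDegree hgsep (IsAlgClosed.splits _), hgdeg]
  have hEfin : (E : Set Ω).Finite := hroot ▸ (g.rootSet Ω).toFinite
  haveI : Finite E := hEfin.to_subtype
  have hcardE : Nat.card E = q ^ 3 := by
    rw [← hcardroot, ← Nat.card_eq_fintype_card]
    exact Nat.card_congr (Equiv.setCongr hroot).symm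
  -- E as F-vector space of dimension 3
  haveI : Module.Finite F E := Module.Finite.of_finite
  haveI : Fintype E := Fintype.ofFinite _
  have hfr : Module.finrank F E = 3 := by
    have hc := Module.card_eq_pow_finrank (K := F) (V := E)
    rw [← Nat.card_eq_fintype_card, hcardE] at hc
    exact (Nat.pow_right_injective hq2 hc.symm)
  let b : Module.Basis (Fin 3) F E := Module.finBasisOfFinrankEq F E hfr
  let ψ : E →ₐ[F] Matrix (Fin 3) (Fin 3) F :=
    (LinearMap.toMatrixAlgEquiv b).toAlgHom.comp (Algebra.lmul F E)
  have hψinj : Function.Injective ψ := ψ.toRingHom.injective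
  let K : AddSubgroup (Matrix (Fin 3) (Fin 3) F) :=
    AddMonoidHom.range ψ.toLinearMap.toAddMonoidHom
  have hcardK : Nat.card K = q ^ 3 := by
    rw [← hcardE]
    exact Nat.card_range_of_injective hψinj
  have hM : Nat.card (Matrix (Fin 3) (Fin 3) F) = q ^ 9 := by
    have hcg := Fintype.card_congr
      ((Matrix.of : (Fin 3 → Fin 3 → F) ≃ Matrix (Fin 3) (Fin 3) F)).symm
    rw [Nat.card_eq_fintype_card, hcg, Fintype.card_fun, Fintype.card_fun]
    simp [← hq, ← pow_mul]
  haveI : Fintype (Matrix (Fin 3) (Fin 3) F ⧸ K) := Fintype.ofFinite _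
  have hQ : Nat.card (Matrix (Fin 3) (Fin 3) F ⧸ K) = q ^ 6 := by
    have h1 := AddSubgroup.card_eq_card_quotient_mul_card_addSubgroup K
    rw [hM, hcardK] at h1
    have h2 : Nat.card (Matrix (Fin 3) (Fin 3) F ⧸ K) * q ^ 3 = q ^ 6 * q ^ 3 := by
      rw [← h1]; ring
    exact Nat.eq_of_mul_eq_mul_right (by positivity) h2
  -- pigeonhole
  have hX6 : q ^ 6 < X.card := by
    have hr : ((q : ℝ)) ^ 6 < (X.card : ℝ) := by
      have h3 : (0:ℝ) ≤ (q:ℝ) ^ 3 := by positivity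
      linarith
    exact_mod_cast hr
  obtain ⟨A, hA, B, hB, hne, hmk⟩ :=
    Finset.exists_ne_map_eq_of_card_lt_of_maps_to
      (s := X) (t := (Finset.univ : Finset (Matrix (Fin 3) (Fin 3) F ⧸ K)))
      (f := fun a => (QuotientAddGroup.mk a : Matrix (Fin 3) (Fin 3) F ⧸ K))
      (by rw [Finset.card_univ, ← Nat.card_eq_fintype_card, hQ]; exact hX6)
      (fun a _ => Finset.mem_univ _)
  obtain ⟨x, hx⟩ := (QuotientAddGroup.eq (s := K)).mp hmk
  refine ⟨A, hA, B, hB, hne, ?_⟩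
  have hBA : B - A = ψ x := by rw [sub_eq_neg_add, ← hx]; rfl
  have hx0 : x ≠ 0 := by
    rintro rfl
    apply hne
    have h0 : B - A = 0 := by rw [hBA, map_zero]
    exact (sub_eq_zero.mp h0).symm
  have hu : IsUnit (ψ x) := (Ne.isUnit hx0).map ψ
  rw [hBA]
  exact ((Matrix.isUnit_iff_isUnit_det _).mp hu).ne_zero
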